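/- Let k̃ ∈ ℝ³ be a unit vector, J_k the cross-product matrix of k̃, and E(t) = cos(t)·I₃ + sin(t)·J_k. Then for all t ∈ ℝ and all z ∈ ℂ³ with z · k̃ = 0, one has |E(t)z| = |z| (with the Hermitian norm on ℂ³). -/

import Mathlib

set_option maxHeartbeats 2000000 in
/-- For a unit vector `k̃ ∈ ℝ³` with cross-product matrix `J_k`, and
`E(t) = cos t · I₃ + sin t · J_k`, one has `|E(t) z| = |z|` (Hermitian norm on
`ℂ³`) for every `t ∈ ℝ` and every `z ∈ ℂ³` with `z · k̃ = 0` (bilinearly). -/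
theorem crossMatrix_rot_isometry
    (k : Fin 3 → ℝ) (hk : k 0 ^ 2 + k 1 ^ 2 + k 2 ^ 2 = 1)
    (Jk : Matrix (Fin 3) (Fin 3) ℂ)
    (hJk : Jk = Matrix.of ![![0, -(k 2 : ℂ), (k 1 : ℂ)],
                            ![(k 2 : ℂ), 0, -(k 0 : ℂ)],
                            ![-(k 1 : ℂ), (k 0 : ℂ), 0]])
    (E : ℝ → Matrix (Fin 3) (Fin 3) ℂ)
    (hE : ∀ t : ℝ, E t = (Real.cos t : ℂ) • (1 : Matrix (Fin 3) (Fin 3) ℂ)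
        + (Real.sin t : ℂ) • Jk)
    (z : Fin 3 → ℂ)
    (hz : z 0 * (k 0 : ℂ) + z 1 * (k 1 : ℂ) + z 2 * (k 2 : ℂ) = 0) :
    ∀ t : ℝ,
      ‖(WithLp.equiv 2 (Fin 3 → ℂ)).symm ((E t).mulVec z)‖
        = ‖(WithLp.equiv 2 (Fin 3 → ℂ)).symm z‖ := by
  intro t
  have hre : (z 0).re * k 0 + (z 1).re * k 1 + (z 2).re * k 2 = 0 := by
    have := congrArg Complex.re hz
    simpa [Complex.add_re, Complex.mul_re] using this
  have him : (z 0).im * k 0 + (z 1).im * k 1 + (z 2).im * k 2 = 0 := by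
    have := congrArg Complex.im hz
    simpa [Complex.add_im, Complex.mul_im] using this
  have hct : Real.cos t ^ 2 + Real.sin t ^ 2 = 1 := by
    rw [add_comm]; exact Real.sin_sq_add_cos_sq t
  rw [EuclideanSpace.norm_eq, EuclideanSpace.norm_eq]
  congr 1
  simp only [WithLp.equiv_symm_apply, PiLp.toLp_apply, Fin.sum_univ_three, hE, hJk,
    Matrix.mulVec, dotProduct, Matrix.add_apply, Matrix.smul_apply,
    Matrix.one_apply, Matrix.of_apply, Matrix.cons_val', Matrix.cons_val_zero,
    Matrix.cons_val_one, Matrix.cons_val_two, Matrix.tail_cons, Matrix.head_cons, Matrix.head_fin_const,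
    Matrix.cons_val_fin_one, Matrix.empty_val', Fin.sum_univ_three,
    Complex.sq_norm, Complex.normSq_apply]
  simp only [Fin.isValue, if_true, if_false, smul_eq_mul, mul_zero, zero_add,
    add_zero, mul_one, Complex.add_re, Complex.add_im, Complex.mul_re,
    Complex.mul_im, Complex.ofReal_re, Complex.ofReal_im, Complex.neg_re,
    Complex.neg_im, Complex.zero_re, Complex.zero_im, zero_mul, sub_zero,
    neg_zero, zero_sub, neg_neg, neg_mul, one_ne_zero, Fin.reduceEq,
    Complex.one_re, Complex.one_im]
  set c := Real.cos t
  set s := Real.sin t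
  set a0 := (z 0).re; set a1 := (z 1).re; set a2 := (z 2).re
  set b0 := (z 0).im; set b1 := (z 1).im; set b2 := (z 2).im
  linear_combination (a0^2+a1^2+a2^2+b0^2+b1^2+b2^2) * hct
    + s^2*(a0^2+a1^2+a2^2+b0^2+b1^2+b2^2) * hk
    - s^2*(a0*k 0 + a1*k 1 + a2*k 2) * hre
    - s^2*(b0*k 0 + b1*k 1 + b2*k 2) * him
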